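/- (Birkhoff's lemma) Let b be a homeomorphism of the plane ℝ² and let x be an isolated fixed point of b. Then at least one of the following holds: (1) x has a basis of neighbourhoods consisting of connected closed sets N satisfying b(N) ⊆ N; or (2) for every sufficiently small closed neighbourhood N of x, there exists a compact connected set k′ ⊆ N containing x and containing a point of the boundary ∂N, and satisfying b⁻¹(k′) ⊆ k′. -/

import Mathlib

open Set

section Aux
variable {X : Type*} [TopologicalSpace X]

/-- iterated intersection `A ∩ f(A) ∩ ... ∩ fⁿ(A)` defined recursively. -/
def birkIter (f : X → X) (A : Set X) : ℕ → Set X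
  | 0 => A
  | n + 1 => A ∩ f '' birkIter f A n

lemma isCompact_connectedComponentIn' [T2Space X] {F : Set X} (hF : IsCompact F) {x : X} :
    IsCompact (connectedComponentIn F x) := by
  by_cases hx : x ∈ F
  · rw [connectedComponentIn_eq_image hx]
    have : CompactSpace F := isCompact_iff_compactSpace.mp hF
    exact isClosed_connectedComponent.isCompact.image continuous_subtype_val
  · rw [connectedComponentIn_eq_empty hx]
    exact isCompact_empty

/-- Boundary bumping: the component of `x` in `T ∩ N` reaches `∂N` if the continuum `T`
escapes `N`. -/
lemma bumping [T2Space X] {T N : Set X} (hT : IsCompact T) (hTc : IsPreconnected T)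
    {x : X} (hxT : x ∈ T) (hxN : x ∈ interior N) (hN : IsClosed N)
    (hy : ¬ T ⊆ N) : (connectedComponentIn (T ∩ N) x ∩ frontier N).Nonempty := by
  obtain ⟨y, hyT, hyN⟩ := not_subset.mp hy
  by_contra hemp
  rw [Set.not_nonempty_iff_eq_empty] at hemp
  set A : Set X := T ∩ N with hA
  have hxA : x ∈ A := ⟨hxT, interior_subset hxN⟩
  have hAc : IsCompact A := hT.inter_right hN
  haveI : CompactSpace A := isCompact_iff_compactSpace.mp hAc
  set x₀ : A := ⟨x, hxA⟩ with hx₀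
  set F' : Set A := Subtype.val ⁻¹' frontier N with hF'
  have hF'closed : IsClosed F' := isClosed_frontier.preimage continuous_subtype_val
  have hF'c : IsCompact F' := hF'closed.isCompact
  have hdisj : F' ∩ ⋂ Z : { Z : Set A // IsClopen Z ∧ x₀ ∈ Z }, (Z : Set A) = ∅ := by
    rw [← connectedComponent_eq_iInter_isClopen x₀]
    rw [eq_empty_iff_forall_notMem]
    rintro a ⟨haF, hacc⟩
    have : (a : X) ∈ connectedComponentIn A x ∩ frontier N := by
      refine ⟨?_, haF⟩
      rw [connectedComponentIn_eq_image hxA]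
      exact ⟨a, hacc, rfl⟩
    rw [hemp] at this
    exact this
  obtain ⟨t, ht⟩ := hF'c.elim_finite_subfamily_closed _
    (fun Z : { Z : Set A // IsClopen Z ∧ x₀ ∈ Z } => Z.2.1.1) hdisj
  set Λ : Set A := ⋂ Z ∈ t, (Z : Set A) with hΛ
  have hΛclopen : IsClopen Λ := isClopen_biInter_finset fun Z _ => Z.2.1
  have hx₀Λ : x₀ ∈ Λ := mem_iInter₂.mpr fun Z _ => Z.2.2
  have hΛF' : Λ ∩ F' = ∅ := by
    rw [eq_empty_iff_forall_notMem]
    rintro a ⟨haΛ, haF⟩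
    exact eq_empty_iff_forall_notMem.mp ht a ⟨haF, haΛ⟩
  set L : Set X := Subtype.val '' Λ with hL
  have hLA : L ⊆ A := by
    rintro z ⟨a, _, rfl⟩; exact a.2
  have hxL : x ∈ L := ⟨x₀, hx₀Λ, rfl⟩
  have hLfr : ∀ z ∈ L, z ∉ frontier N := by
    rintro z ⟨a, haΛ, rfl⟩ hzf
    exact eq_empty_iff_forall_notMem.mp hΛF' a ⟨haΛ, hzf⟩
  have hLint : L ⊆ interior N := by
    intro z hzL
    have hzN : z ∈ N := (hLA hzL).2
    by_contra hzi
    exact hLfr z hzL (by rw [hN.frontier_eq]; exact ⟨hzN, hzi⟩)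
  have hLcpt : IsCompact L := (hΛclopen.1.isCompact).image continuous_subtype_val
  have hLclosed : IsClosed L := hLcpt.isClosed
  obtain ⟨W, hWopen, hWΛ⟩ := isOpen_induced_iff.mp hΛclopen.2
  have hLeq : L = T ∩ (W ∩ interior N) := by
    apply Subset.antisymm
    · intro z hzL
      obtain ⟨a, haΛ, rfl⟩ := hzL
      refine ⟨a.2.1, ?_, hLint ⟨a, haΛ, rfl⟩⟩
      have : a ∈ Subtype.val ⁻¹' W := by rw [hWΛ]; exact haΛ
      exact this
    · rintro z ⟨hzT, hzW, hzint⟩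
      have hzA : z ∈ A := ⟨hzT, interior_subset hzint⟩
      refine ⟨⟨z, hzA⟩, ?_, rfl⟩
      rw [← hWΛ]; exact hzW
  rcases hTc (W ∩ interior N) Lᶜ (hWopen.inter isOpen_interior) hLclosed.isOpen_compl
    (by
      intro z hzT
      by_cases hzL : z ∈ L
      · left; exact (hLeq ▸ hzL).2
      · right; exact hzL)
    ⟨x, hxT, (hLeq ▸ hxL).2⟩
    ⟨y, hyT, fun hyL => hyN (hLA hyL).2⟩ with ⟨z, hzT, hzu, hzv⟩
  exact hzv (by rw [hLeq]; exact ⟨hzT, hzu⟩)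

/-- Decreasing intersection of continua is preconnected. -/
lemma isPreconnected_iInter_chain [T2Space X] [NormalSpace X] {C : ℕ → Set X}
    (hcpt : ∀ n, IsCompact (C n)) (hconn : ∀ n, IsPreconnected (C n))
    (hmono : ∀ n, C (n + 1) ⊆ C n) : IsPreconnected (⋂ n, C n) := by
  have hclosed : ∀ n, IsClosed (C n) := fun n => (hcpt n).isClosed
  have hCc : IsClosed (⋂ n, C n) := isClosed_iInter hclosed
  have hCcpt : IsCompact (⋂ n, C n) :=
    (hcpt 0).of_isClosed_subset hCc (iInter_subset _ 0)
  rw [isPreconnected_iff_subset_of_fully_disjoint_closed hCc]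
  intro u v hu hv hcov hdisj
  set A : Set X := (⋂ n, C n) ∩ u with hA
  set B : Set X := (⋂ n, C n) ∩ v with hB
  by_cases hAne : A.Nonempty
  · by_cases hBne : B.Nonempty
    · exfalso
      have hAcpt : IsCompact A := hCcpt.inter_right hu
      have hBcpt : IsCompact B := hCcpt.inter_right hv
      have hABdisj : Disjoint A B :=
        (hdisj.mono inter_subset_right inter_subset_right)
      obtain ⟨U, V, hU, hV, hAU, hBV, hUV⟩ :=
        SeparatedNhds.of_isCompact_isCompact hAcpt hBcpt hABdisj
      have hnn : ∃ n, C n ⊆ U ∪ V := by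
        by_contra hcon
        push_neg at hcon
        have h0 := IsCompact.nonempty_iInter_of_sequence_nonempty_isCompact_isClosed
          (fun n => C n \ (U ∪ V))
          (fun n => diff_subset_diff_left (hmono n))
          (fun n => by
            obtain ⟨z, hz1, hz2⟩ := not_subset.mp (hcon n)
            exact ⟨z, hz1, hz2⟩)
          ((hcpt 0).diff (hU.union hV))
          (fun n => (hclosed n).sdiff (hU.union hV))
        obtain ⟨z, hz⟩ := h0
        have hz1 : z ∈ ⋂ n, C n := mem_iInter.mpr fun n => (mem_iInter.mp hz n).1
        have hz2 : z ∉ U ∪ V := (mem_iInter.mp hz 0).2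
        rcases hcov hz1 with hzu | hzv
        · exact hz2 (Or.inl (hAU ⟨hz1, hzu⟩))
        · exact hz2 (Or.inr (hBV ⟨hz1, hzv⟩))
      obtain ⟨n, hn⟩ := hnn
      obtain ⟨a, haA⟩ := hAne
      obtain ⟨b, hbB⟩ := hBne
      rcases hconn n U V hU hV hn
        ⟨a, mem_iInter.mp haA.1 n, hAU haA⟩
        ⟨b, mem_iInter.mp hbB.1 n, hBV hbB⟩ with ⟨z, _, hzU, hzV⟩
      exact (hUV.ne_of_mem hzU hzV) rfl
    · left
      intro z hz
      rcases hcov hz with h | h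
      · exact h
      · exact absurd ⟨z, hz, h⟩ hBne
  · right
    intro z hz
    rcases hcov hz with h | h
    · exact absurd ⟨z, hz, h⟩ hAne
    · exact h

end Aux

/-- **Birkhoff's lemma.** Let `b` be a homeomorphism of the plane and `x` an
isolated fixed point of `b`. Then either (1) `x` has a basis of connected
closed neighbourhoods `N` with `b(N) ⊆ N`, or (2) every sufficiently small
closed neighbourhood `N` of `x` contains a compact connected set `k'`
containing `x` and a point of `∂N`, with `b⁻¹(k') ⊆ k'`. -/

theorem birkhoff_lemma
    (b : (ℝ × ℝ) ≃ₜ (ℝ × ℝ)) (x : ℝ × ℝ) (hx : b x = x)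
    (hx_isolated : ∃ U ∈ nhds x, ∀ y ∈ U, b y = y → y = x) :
    (∀ U ∈ nhds x, ∃ N ∈ nhds x, N ⊆ U ∧ IsClosed N ∧ IsConnected N ∧ ⇑b '' N ⊆ N) ∨
    (∃ U ∈ nhds x, ∀ N ∈ nhds x, N ⊆ U → IsClosed N →
      ∃ k' : Set (ℝ × ℝ), IsCompact k' ∧ IsConnected k' ∧ k' ⊆ N ∧ x ∈ k' ∧
        (k' ∩ frontier N).Nonempty ∧ ⇑b.symm '' k' ⊆ k') := by
  by_cases h1 : ∀ U ∈ nhds x, ∃ N ∈ nhds x, N ⊆ U ∧ IsClosed N ∧ IsConnected N ∧ ⇑b '' N ⊆ N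
  · exact Or.inl h1
  right
  push_neg at h1
  obtain ⟨U₀, hU₀, hbad⟩ := h1
  have hsx : b.symm x = x := by
    have := b.symm_apply_apply x
    rwa [hx] at this
  refine ⟨U₀ ∩ Metric.closedBall x 1,
    Filter.inter_mem hU₀ (Metric.closedBall_mem_nhds x one_pos), ?_⟩
  intro N hN hNU hNclosed
  have hNU₀ : N ⊆ U₀ := fun z hz => (hNU hz).1
  have hNcpt : IsCompact N :=
    (isCompact_closedBall x 1).of_isClosed_subset hNclosed (fun z hz => (hNU hz).2)
  have hxint : x ∈ interior N := mem_interior_iff_mem_nhds.mpr hN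
  have hxN : x ∈ N := interior_subset hxint
  set K : ℕ → Set (ℝ × ℝ) := birkIter ⇑b N with hK
  have hK0 : K 0 = N := rfl
  have hKs : ∀ n, K (n + 1) = N ∩ ⇑b '' K n := fun n => rfl
  have hKsub : ∀ n, K n ⊆ N := by
    intro n; cases n with
    | zero => exact Subset.rfl
    | succ n => exact inter_subset_left
  have hxK : ∀ n, x ∈ K n := by
    intro n; induction n with
    | zero => exact hxN
    | succ n ih => exact ⟨hxN, ⟨x, ih, hx⟩⟩
  have hKmono : ∀ n, K (n + 1) ⊆ K n := by
    intro n; induction n with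
    | zero => exact inter_subset_left
    | succ n ih =>
      rw [hKs (n + 1), hKs n]
      exact inter_subset_inter_right _ (image_mono ih)
  have hKcpt : ∀ n, IsCompact (K n) := by
    intro n; induction n with
    | zero => exact hNcpt
    | succ n ih => exact hNcpt.inter (ih.image b.continuous)
  have hKclosed : ∀ n, IsClosed (K n) := fun n => (hKcpt n).isClosed
  have hKsymm : ∀ n, ⇑b.symm '' K (n + 1) ⊆ K n := by
    rintro n z ⟨w, hw, rfl⟩
    obtain ⟨u, hu, rfl⟩ := hw.2
    rw [b.symm_apply_apply]
    exact hu
  set C : ℕ → Set (ℝ × ℝ) := fun n => connectedComponentIn (K n) x with hC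
  have hxC : ∀ n, x ∈ C n := fun n => mem_connectedComponentIn (hxK n)
  have hCsub : ∀ n, C n ⊆ K n := fun n => connectedComponentIn_subset _ _
  have hCcpt : ∀ n, IsCompact (C n) := fun n => isCompact_connectedComponentIn' (hKcpt n)
  have hCconn : ∀ n, IsPreconnected (C n) := fun n => isPreconnected_connectedComponentIn
  have hCmono : ∀ n, C (n + 1) ⊆ C n := fun n =>
    (hCconn (n + 1)).subset_connectedComponentIn (hxC (n + 1))
      ((hCsub (n + 1)).trans (hKmono n))
  have hCsymm : ∀ n, ⇑b.symm '' C (n + 1) ⊆ C n := fun n =>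
    ((hCconn (n + 1)).image _ b.symm.continuous.continuousOn).subset_connectedComponentIn
      ⟨x, hxC (n + 1), hsx⟩ ((image_mono (hCsub (n + 1))).trans (hKsymm n))
  by_cases hcase : ∀ n, (C n ∩ frontier N).Nonempty
  · -- Case A : the nested continua all reach the boundary
    refine ⟨⋂ n, C n, ?_, ?_, ?_, ?_, ?_, ?_⟩
    · exact (hCcpt 0).of_isClosed_subset
        (isClosed_iInter fun n => (hCcpt n).isClosed) (iInter_subset _ 0)
    · exact ⟨⟨x, mem_iInter.mpr hxC⟩, isPreconnected_iInter_chain hCcpt hCconn hCmono⟩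
    · exact (iInter_subset _ 0).trans (hCsub 0)
    · exact mem_iInter.mpr hxC
    · obtain ⟨z, hz⟩ := IsCompact.nonempty_iInter_of_sequence_nonempty_isCompact_isClosed
        (fun n => C n ∩ frontier N)
        (fun n => inter_subset_inter_left _ (hCmono n)) hcase
        ((hCcpt 0).inter_right isClosed_frontier)
        (fun n => (hCcpt n).isClosed.inter isClosed_frontier)
      exact ⟨z, mem_iInter.mpr fun n => (mem_iInter.mp hz n).1, (mem_iInter.mp hz 0).2⟩
    · rintro z ⟨w, hw, rfl⟩
      exact mem_iInter.mpr fun n => hCsymm n ⟨w, mem_iInter.mp hw (n + 1), rfl⟩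
  · -- Case B : some continuum avoids the boundary; build an invariant neighbourhood
    exfalso
    push_neg at hcase
    obtain ⟨n, hn⟩ := hcase

    have hCint : C n ⊆ interior N := by
      intro z hz
      have hzN : z ∈ N := hKsub n (hCsub n hz)
      by_contra hzi
      exact eq_empty_iff_forall_notMem.mp hn z
        ⟨hz, by rw [hNclosed.frontier_eq]; exact ⟨hzN, hzi⟩⟩
    have hfr1 : C (n + 1) ∩ frontier N = ∅ := by
      rw [eq_empty_iff_forall_notMem]
      rintro z ⟨hz1, hz2⟩
      exact eq_empty_iff_forall_notMem.mp hn z ⟨hCmono n hz1, hz2⟩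
    have hbCN : ⇑b '' C n ⊆ N := by
      by_contra hns
      have hbump := bumping ((hCcpt n).image b.continuous)
        ((hCconn n).image _ b.continuous.continuousOn) ⟨x, hxC n, hx⟩ hxint hNclosed hns
      have hsubS : connectedComponentIn ((⇑b '' C n) ∩ N) x ⊆ C (n + 1) := by
        have hxTN : x ∈ (⇑b '' C n) ∩ N := ⟨⟨x, hxC n, hx⟩, hxN⟩
        apply IsPreconnected.subset_connectedComponentIn isPreconnected_connectedComponentIn
          (mem_connectedComponentIn hxTN)
        refine (connectedComponentIn_subset _ _).trans ?_
        rintro z ⟨hz1, hz2⟩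
        rw [hKs n]
        exact ⟨hz2, image_mono (hCsub n) hz1⟩
      obtain ⟨z, hz1, hz2⟩ := hbump
      exact eq_empty_iff_forall_notMem.mp hfr1 z ⟨hsubS hz1, hz2⟩
    have hbC : ⇑b '' C n ⊆ C n := by
      apply IsPreconnected.subset_connectedComponentIn
        ((hCconn n).image _ b.continuous.continuousOn) ⟨x, hxC n, hx⟩
      refine ?_
      have : ⇑b '' C n ⊆ K (n + 1) := by
        rw [hKs n]
        exact subset_inter hbCN (image_mono (hCsub n))
      exact this.trans (hKmono n)
    set G : ℕ → Set (ℝ × ℝ) := birkIter ⇑b (interior N) with hG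
    have hGs : ∀ k, G (k + 1) = interior N ∩ ⇑b '' G k := fun k => rfl
    have hGopen : ∀ k, IsOpen (G k) := by
      intro k; induction k with
      | zero => exact isOpen_interior
      | succ k ih => exact isOpen_interior.inter (b.isOpenMap _ ih)
    have hxG : ∀ k, x ∈ G k := by
      intro k; induction k with
      | zero => exact hxint
      | succ k ih => exact ⟨hxint, ⟨x, ih, hx⟩⟩
    have hGK : ∀ k, G k ⊆ K k := by
      intro k; induction k with
      | zero => exact interior_subset
      | succ k ih =>
        rw [hGs k, hKs k]
        exact inter_subset_inter interior_subset (image_mono ih)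
    have hGmono : ∀ k, G (k + 1) ⊆ G k := by
      intro k; induction k with
      | zero => exact inter_subset_left
      | succ k ih =>
        rw [hGs (k + 1), hGs k]
        exact inter_subset_inter_right _ (image_mono ih)
    set O : Set (ℝ × ℝ) := connectedComponentIn (G n) x with hO
    have hOopen : IsOpen O := (hGopen n).connectedComponentIn
    have hxO : x ∈ O := mem_connectedComponentIn (hxG n)
    have hOclC : closure O ⊆ C n := by
      apply IsPreconnected.subset_connectedComponentIn
        isPreconnected_connectedComponentIn.closure (subset_closure hxO)
      exact closure_minimal ((connectedComponentIn_subset _ _).trans (hGK n)) (hKclosed n)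
    have hbO : ⇑b '' O ⊆ O := by
      apply IsPreconnected.subset_connectedComponentIn
        (isPreconnected_connectedComponentIn.image _ b.continuous.continuousOn) ⟨x, hxO, hx⟩
      have h1 : ⇑b '' O ⊆ interior N :=
        ((image_mono (subset_closure.trans hOclC)).trans hbC).trans hCint
      have h2 : ⇑b '' O ⊆ ⇑b '' G n := image_mono (connectedComponentIn_subset _ _)
      have : ⇑b '' O ⊆ G (n + 1) := by rw [hGs n]; exact subset_inter h1 h2
      exact this.trans (hGmono n)
    refine hbad (closure O) (Filter.mem_of_superset (hOopen.mem_nhds hxO) subset_closure)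
      ((hOclC.trans ((hCsub n).trans (hKsub n))).trans hNU₀) isClosed_closure
      ⟨⟨x, subset_closure hxO⟩, isPreconnected_connectedComponentIn.closure⟩ ?_
    rw [b.image_closure]
    exact closure_mono hbO
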